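/- Let ψ : X → Z and φ : Y → W be continuous maps. The combined map ψ + φ : X +_f Y → Z +_h W (acting as ψ on X and φ on Y) is continuous if and only if for every closed set A ⊆ Z, f(ψ⁻¹(A)) ⊆ φ⁻¹(h(A)). -/
import Mathlib


open Set Topology

variable {X Y : Type*} [TopologicalSpace X] [TopologicalSpace Y]

/-- A map on subsets is *admissible* if it sends closed sets to closed sets,
the empty set to the empty set, and is finitely additive on closed sets. -/
def Admissible (f : Set X → Set Y) : Prop :=
  (∀ A : Set X, IsClosed A → IsClosed (f A)) ∧ f ∅ = ∅ ∧
    ∀ A B : Set X, IsClosed A → IsClosed B → f (A ∪ B) = f A ∪ f B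

/-- The defining condition for a subset of `X ⊕ Y` to be closed in the sum space `X +_f Y`. -/
def SumClosed (f : Set X → Set Y) (A : Set (X ⊕ Y)) : Prop :=
  IsClosed (Sum.inl ⁻¹' A) ∧ IsClosed (Sum.inr ⁻¹' A) ∧
    f (Sum.inl ⁻¹' A) ⊆ Sum.inr ⁻¹' A

theorem Admissible.mono {f : Set X → Set Y} (hf : Admissible f) {A B : Set X}
    (hA : IsClosed A) (hB : IsClosed B) (hAB : A ⊆ B) : f A ⊆ f B := by
  have h := hf.2.2 A B hA hB
  rw [union_eq_right.mpr hAB] at h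
  rw [h]; exact subset_union_left

/-- The sum space `X +_f Y`. -/
def sumTopology (f : Set X → Set Y) (hf : Admissible f) : TopologicalSpace (X ⊕ Y) where
  IsOpen s := SumClosed f sᶜ
  isOpen_univ := by
    refine ⟨?_, ?_, ?_⟩ <;> simp [hf.2.1]
  isOpen_inter := by
    rintro s t ⟨hs1, hs2, hs3⟩ ⟨ht1, ht2, ht3⟩
    refine ⟨?_, ?_, ?_⟩
    · simpa [compl_inter, preimage_union] using hs1.union ht1
    · simpa [compl_inter, preimage_union] using hs2.union ht2
    · rw [compl_inter, preimage_union, preimage_union, hf.2.2 _ _ hs1 ht1]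
      exact union_subset_union hs3 ht3
  isOpen_sUnion := by
    intro S hS
    have hc : (⋃₀ S)ᶜ = ⋂ s ∈ S, sᶜ := by
      rw [compl_sUnion, sInter_image]
    have h1 : IsClosed (Sum.inl ⁻¹' (⋃₀ S)ᶜ) := by
      rw [hc, preimage_iInter₂]
      exact isClosed_biInter fun s hs => (hS s hs).1
    have h2 : IsClosed (Sum.inr ⁻¹' (⋃₀ S)ᶜ) := by
      rw [hc, preimage_iInter₂]
      exact isClosed_biInter fun s hs => (hS s hs).2.1
    refine ⟨h1, h2, ?_⟩
    rw [hc, preimage_iInter₂, preimage_iInter₂]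
    refine subset_iInter₂ fun s hs => ?_
    have h1' : IsClosed (⋂ i ∈ S, Sum.inl ⁻¹' iᶜ) := by
      exact isClosed_biInter fun i hi => (hS i hi).1
    calc f (⋂ i ∈ S, Sum.inl ⁻¹' iᶜ) ⊆ f (Sum.inl ⁻¹' sᶜ) :=
          hf.mono h1' (hS s hs).1 (iInter₂_subset s hs)
      _ ⊆ Sum.inr ⁻¹' sᶜ := (hS s hs).2.2

theorem isClosed_sumTopology {f : Set X → Set Y} (hf : Admissible f) (A : Set (X ⊕ Y)) :
    IsClosed[sumTopology f hf] A ↔ SumClosed f A := by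
  rw [← @isOpen_compl_iff _ _ (sumTopology f hf)]
  show SumClosed f Aᶜᶜ ↔ _
  rw [compl_compl]

/-- continuity criterion for `ψ + φ : X +_f Y → Z +_h W`. -/
theorem statement9 {Z W : Type*} [TopologicalSpace Z] [TopologicalSpace W]
    (f : Set X → Set Y) (hf : Admissible f) (h : Set Z → Set W) (hh : Admissible h)
    (ψ : X → Z) (φ : Y → W) (hψ : Continuous ψ) (hφ : Continuous φ) :
    Continuous[sumTopology f hf, sumTopology h hh] (Sum.map ψ φ) ↔
      ∀ A : Set Z, IsClosed A → f (ψ ⁻¹' A) ⊆ φ ⁻¹' (h A) := by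
  rw [@continuous_iff_isClosed _ _ (sumTopology f hf) (sumTopology h hh)]
  constructor
  · intro hc A hA
    have hB : IsClosed[sumTopology h hh] (Sum.inl '' A ∪ Sum.inr '' h A) := by
      rw [isClosed_sumTopology]
      refine ⟨?_, ?_, ?_⟩
      · have : Sum.inl ⁻¹' (Sum.inl '' A ∪ Sum.inr '' h A) = A := by
          simp [preimage_union, preimage_image_eq _ Sum.inl_injective]
        rw [this]; exact hA
      · have : Sum.inr ⁻¹' (Sum.inl '' A ∪ Sum.inr '' h A) = h A := by
          simp [preimage_union, preimage_image_eq _ Sum.inr_injective]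
        rw [this]; exact hh.1 A hA
      · have e : Sum.inl ⁻¹' (Sum.inl '' A ∪ Sum.inr '' h A) = A := by
          simp [preimage_union, preimage_image_eq _ Sum.inl_injective]
        rw [e]
        intro w hw
        simp [preimage_union, preimage_image_eq _ Sum.inr_injective, hw]
    have := hc _ hB
    rw [isClosed_sumTopology] at this
    obtain ⟨-, -, h3⟩ := this
    have e1 : Sum.inl ⁻¹' (Sum.map ψ φ ⁻¹' (Sum.inl '' A ∪ Sum.inr '' h A)) = ψ ⁻¹' A := by
      ext x; simp
    have e2 : Sum.inr ⁻¹' (Sum.map ψ φ ⁻¹' (Sum.inl '' A ∪ Sum.inr '' h A)) = φ ⁻¹' (h A) := by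
      ext y; simp
    rw [e1, e2] at h3
    exact h3
  · intro hc B hB
    rw [isClosed_sumTopology] at hB ⊢
    obtain ⟨h1, h2, h3⟩ := hB
    have e1 : Sum.inl ⁻¹' (Sum.map ψ φ ⁻¹' B) = ψ ⁻¹' (Sum.inl ⁻¹' B) := rfl
    have e2 : Sum.inr ⁻¹' (Sum.map ψ φ ⁻¹' B) = φ ⁻¹' (Sum.inr ⁻¹' B) := rfl
    refine ⟨?_, ?_, ?_⟩
    · rw [e1]; exact h1.preimage hψ
    · rw [e2]; exact h2.preimage hφ
    · rw [e1, e2]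
      exact (hc _ h1).trans (preimage_mono h3)
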